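/- Let r be an odd prime, a, b integers with r ∤ b·(a²−4b), and s an integer with s² ≡ b (mod r). Suppose that neither a + 2s nor a − 2s is a nonzero quadratic residue modulo r (i.e., for each sign ε, the Legendre symbol ((a+2εs)/r) ≠ 1). Then the congruence t⁴ − 2a·t²·z² + (a²−4b)·z⁴ ≡ 0 (mod r) has no solution with r ∤ t and r ∤ z. -/
import Mathlib


theorem no_unit_sol_quartic (r : ℕ) [Fact (Nat.Prime r)] (hodd : Odd r)
    (a b : ℤ) (hdvd : ¬ (r : ℤ) ∣ b * (a^2 - 4 * b))
    (s : ℤ) (hs : s^2 ≡ b [ZMOD (r : ℤ)])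
    (hnr : ∀ ε : ℤ, ε = 1 ∨ ε = -1 → legendreSym r (a + 2 * ε * s) ≠ 1) :
    ¬ ∃ t z : ℤ, ¬ (r : ℤ) ∣ t ∧ ¬ (r : ℤ) ∣ z ∧
      t^4 - 2 * a * t^2 * z^2 + (a^2 - 4 * b) * z^4 ≡ 0 [ZMOD (r : ℤ)] := by
  rintro ⟨t, z, ht, hz, h⟩
  have hb : ((s : ZMod r))^2 = (b : ZMod r) := by
    have := (ZMod.intCast_eq_intCast_iff _ _ _).mpr hs
    push_cast at this
    exact this
  have hz' : ((z : ℤ) : ZMod r) ≠ 0 := fun h0 =>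
    hz ((ZMod.intCast_zmod_eq_zero_iff_dvd z r).mp h0)
  have h0 : (((t : ZMod r))^2 - ((a : ZMod r) + 2*(s : ZMod r))*((z : ZMod r))^2) *
      (((t : ZMod r))^2 - ((a : ZMod r) - 2*(s : ZMod r))*((z : ZMod r))^2) = 0 := by
    have h1 : ((t^4 - 2 * a * t^2 * z^2 + (a^2 - 4 * b) * z^4 : ℤ) : ZMod r) = 0 := by
      have := (ZMod.intCast_eq_intCast_iff _ _ _).mpr h
      push_cast at this
      push_cast
      linear_combination this
    push_cast at h1
    linear_combination h1 - 4 * ((z : ZMod r))^4 * hb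
  have key : ∀ ε : ℤ, (ε = 1 ∨ ε = -1) →
      ((t : ZMod r))^2 = ((a + 2*ε*s : ℤ) : ZMod r) * ((z : ZMod r))^2 → False := by
    intro ε hε heq
    have hε2 : ((ε : ZMod r))^2 = 1 := by rcases hε with h' | h' <;> simp [h']
    have hc : ((a + 2*ε*s : ℤ) : ZMod r) ≠ 0 := by
      intro h0c
      apply hdvd
      have hdvd1 : (r : ℤ) ∣ (a^2 - 4*b) := by
        rw [← ZMod.intCast_zmod_eq_zero_iff_dvd]
        push_cast at h0c ⊢
        linear_combination ((a : ZMod r) - 2*(ε : ZMod r)*(s : ZMod r)) * h0c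
          + 4 * ((s : ZMod r))^2 * hε2 + 4 * hb
      exact Dvd.dvd.mul_left hdvd1 b
    apply hnr ε hε
    rw [legendreSym.eq_one_iff r hc]
    refine ⟨(t : ZMod r) * ((z : ZMod r))⁻¹, ?_⟩
    push_cast at heq ⊢
    field_simp
    linear_combination -heq
  rcases mul_eq_zero.mp h0 with hcase | hcase
  · exact key 1 (Or.inl rfl) (by push_cast; linear_combination hcase)
  · exact key (-1) (Or.inr rfl) (by push_cast; linear_combination hcase)
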